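/- Every canonical answer set of a dl-program K = (O,P) is a strong answer set of K. -/

import Mathlib

namespace DLP

/-- The three dl-atom input operators ⊕, ⊙, ⊖. -/
inductive Op | oplus | odot | ominus

/-- An abstract dl-atom `DL[S₁ op₁ p₁, …; Q](t)`: a list of inputs together with
the entailment check `O ∪ A ⊨ Q(t)` applied to a set of (possibly negated) assertions. -/
structure DLA (Conc Pred Arg : Type) where
  inputs : List (Conc × Op × Pred)
  entails : Set (Conc × Arg × Bool) → Prop

variable {Conc Pred Arg : Type}

/-- Atoms of the Herbrand base: predicate applied to an argument tuple. -/
abbrev Atom (Pred Arg : Type) := Pred × Arg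

/-- Interpretations are subsets of the Herbrand base. -/
abbrev Interp (Pred Arg : Type) := Set (Atom Pred Arg)

/-- Extension of a predicate under an interpretation. -/
def extOf (I : Interp Pred Arg) : Pred → Set Arg := fun p => {e | (p, e) ∈ I}

/-- The assertions contributed by one input entry, given predicate extensions. -/
def contrib (ext : Pred → Set Arg) : Conc × Op × Pred → Set (Conc × Arg × Bool)
  | (S, Op.oplus, p) => {x | ∃ e ∈ ext p, x = (S, e, true)}
  | (S, Op.odot, p) => {x | ∃ e ∈ ext p, x = (S, e, false)}
  | (S, Op.ominus, p) => {x | ∃ e, e ∉ ext p ∧ x = (S, e, false)}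

/-- Evaluate a dl-atom on given predicate extensions. -/
def DLA.eval (A : DLA Conc Pred Arg) (ext : Pred → Set Arg) : Prop :=
  A.entails {x | ∃ c ∈ A.inputs, x ∈ contrib ext c}

/-- `I ⊨_O A` for a dl-atom `A`. -/
def DLA.sat (A : DLA Conc Pred Arg) (I : Interp Pred Arg) : Prop := A.eval (extOf I)

/-- A dl-atom is monotonic (relative to the program) if `I ⊨_O A` and `I ⊆ I'` imply `I' ⊨_O A`. -/
def DLA.Mono (A : DLA Conc Pred Arg) : Prop :=
  ∀ ⦃I J : Interp Pred Arg⦄, I ⊆ J → A.sat I → A.sat J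

/-- A body element: an ordinary atom or a dl-atom. -/
abbrev BodyElem (Conc Pred Arg : Type) := Atom Pred Arg ⊕ DLA Conc Pred Arg

/-- Satisfaction of a body element: membership for atoms, dl-satisfaction for dl-atoms. -/
def satB (I : Interp Pred Arg) : BodyElem Conc Pred Arg → Prop
  | Sum.inl a => a ∈ I
  | Sum.inr d => d.sat I

/-- A dl-rule `head ← Pos, not Neg`. -/
structure Rule (Conc Pred Arg : Type) where
  head : Atom Pred Arg
  pos : Set (BodyElem Conc Pred Arg)
  neg : Set (BodyElem Conc Pred Arg)

/-- A dl-program: a set of dl-rules (the ontology `O` is folded into the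
entailment relation carried by each dl-atom). -/
structure Prog (Conc Pred Arg : Type) where
  rules : Set (Rule Conc Pred Arg)

/-- `I` satisfies the body of rule `r` relative to `O`. -/
def satBody (I : Interp Pred Arg) (r : Rule Conc Pred Arg) : Prop :=
  (∀ b ∈ r.pos, satB I b) ∧ (∀ b ∈ r.neg, ¬ satB I b)

/-- `I` is a model of the dl-program. -/
def isModel (P : Prog Conc Pred Arg) (I : Interp Pred Arg) : Prop :=
  ∀ r ∈ P.rules, satBody I r → r.head ∈ I

/-- `I` is a supported model of the dl-program. -/
def Supported (P : Prog Conc Pred Arg) (I : Interp Pred Arg) : Prop :=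
  isModel P I ∧ ∀ h ∈ I, ∃ r ∈ P.rules, r.head = h ∧ satBody I r

/-- `I` satisfies the completion `COMP(K)` relative to `O`. -/
def satComp (P : Prog Conc Pred Arg) (I : Interp Pred Arg) : Prop :=
  ∀ h : Atom Pred Arg, h ∈ I ↔ ∃ r ∈ P.rules, r.head = h ∧ satBody I r

/-- A positive dl-program: no negation as failure, and all occurring dl-atoms monotonic. -/
def Positive (P : Prog Conc Pred Arg) : Prop :=
  (∀ r ∈ P.rules, r.neg = (∅ : Set (BodyElem Conc Pred Arg))) ∧
  (∀ r ∈ P.rules, ∀ d : DLA Conc Pred Arg, Sum.inr d ∈ r.pos ∪ r.neg → d.Mono)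

/-- One-step consequence operator `γ_K`. -/
def gamma (P : Prog Conc Pred Arg) (J : Interp Pred Arg) : Interp Pred Arg :=
  {h | ∃ r ∈ P.rules, r.head = h ∧ ∀ b ∈ r.pos, satB J b}

/-- Least fixed point of the one-step consequence operator (Knaster–Tarski form). -/
def lfpGamma (P : Prog Conc Pred Arg) : Interp Pred Arg :=
  ⋂₀ {J | gamma P J ⊆ J}

/-- The weak dl-transform `wP_O^I`. -/
def weakReduct (P : Prog Conc Pred Arg) (I : Interp Pred Arg) : Prog Conc Pred Arg :=
  ⟨{r' | ∃ r ∈ P.rules,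
      (∀ d : DLA Conc Pred Arg, Sum.inr d ∈ r.pos → d.sat I) ∧
      (∀ b ∈ r.neg, ¬ satB I b) ∧
      r' = ⟨r.head, {b ∈ r.pos | ∃ a, b = Sum.inl a}, ∅⟩}⟩

/-- The strong dl-transform `sP_O^I`. -/
def strongReduct (P : Prog Conc Pred Arg) (I : Interp Pred Arg) : Prog Conc Pred Arg :=
  ⟨{r' | ∃ r ∈ P.rules,
      (∀ d : DLA Conc Pred Arg, Sum.inr d ∈ r.pos → ¬ d.Mono → d.sat I) ∧
      (∀ b ∈ r.neg, ¬ satB I b) ∧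
      r' = ⟨r.head,
            {b ∈ r.pos | (∃ a, b = Sum.inl a) ∨ ∃ d : DLA Conc Pred Arg, b = Sum.inr d ∧ d.Mono},
            ∅⟩}⟩

/-- `I` is a weak answer set: the least model of the weak dl-transform. -/
def WeakAS (P : Prog Conc Pred Arg) (I : Interp Pred Arg) : Prop :=
  IsLeast {J | isModel (weakReduct P I) J} I

/-- `I` is a strong answer set: the least model of the strong dl-transform. -/
def StrongAS (P : Prog Conc Pred Arg) (I : Interp Pred Arg) : Prop :=
  IsLeast {J | isModel (strongReduct P I) J} I

/-- A loop of a directed graph: a nonempty vertex set through which a cycle passes,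
visiting only and all its nodes (i.e., strongly connected via nonempty paths inside `L`). -/
def IsLoop {α : Type} (E : α → α → Prop) (L : Set α) : Prop :=
  L.Nonempty ∧ ∀ u ∈ L, ∀ v ∈ L,
    Relation.TransGen (fun a b => E a b ∧ a ∈ L ∧ b ∈ L) u v

/-- A maximal loop. -/
def MaxLoop {α : Type} (E : α → α → Prop) (L : Set α) : Prop :=
  IsLoop E L ∧ ∀ L', IsLoop E L' → L ⊆ L' → L' = L

/-- A terminating loop: a maximal loop from which no other maximal loop is reachable. -/
def TermLoop {α : Type} (E : α → α → Prop) (L : Set α) : Prop :=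
  MaxLoop E L ∧ ∀ L', MaxLoop E L' → L' ≠ L →
    ∀ u ∈ L, ∀ v ∈ L', ¬ Relation.ReflTransGen E u v

/-- Edge relation of the weak positive dependency graph. -/
def edgeWeak (P : Prog Conc Pred Arg) (u v : Atom Pred Arg) : Prop :=
  ∃ r ∈ P.rules, r.head = u ∧ Sum.inl v ∈ r.pos

/-- The dl-atom mentions predicate `q` among its input predicates. -/
def mentionsPred (d : DLA Conc Pred Arg) (q : Pred) : Prop :=
  ∃ S op, (S, op, q) ∈ d.inputs

/-- Edge relation of the strong positive dependency graph. -/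
def edgeStrong (P : Prog Conc Pred Arg) (u v : Atom Pred Arg) : Prop :=
  ∃ r ∈ P.rules, r.head = u ∧
    (Sum.inl v ∈ r.pos ∨
     ∃ d : DLA Conc Pred Arg, Sum.inr d ∈ r.pos ∧ d.Mono ∧ mentionsPred d v.1)

/-- Satisfaction of the weak loop formula `wLF(L,K)` by `I` relative to `O`. -/
def satWLF (P : Prog Conc Pred Arg) (I : Interp Pred Arg) (L : Set (Atom Pred Arg)) : Prop :=
  (∃ a ∈ L, a ∈ I) →
    ∃ r ∈ P.rules, r.head ∈ L ∧ (∀ a ∈ L, Sum.inl a ∉ r.pos) ∧ satBody I r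

/-- Predicate extensions used by the irrelevant formula `IF(A,L)`: predicates occurring
in `L` are renamed to `p_L`, whose extension (under the extension `I'` of `I`) consists of
the `p`-atoms of `I \ L`; other predicates keep their extension in `I`. -/
def extIF (I L : Interp Pred Arg) : Pred → Set Arg := fun p =>
  {e | ((∃ e', (p, e') ∈ L) ∧ (p, e) ∈ I \ L) ∨ ((¬ ∃ e', (p, e') ∈ L) ∧ (p, e) ∈ I)}

/-- `I' ⊨_O IF(A,L)`: the irrelevant formula of `A` relative to `L`, evaluated under
the extension `I'` of `I` satisfying the renamed-predicate axioms. -/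
def satIF (A : DLA Conc Pred Arg) (I L : Interp Pred Arg) : Prop :=
  A.eval (extIF I L)

/-- Satisfaction of `γ(A, L)`-transformed positive body elements
(monotonic dl-atoms are replaced by their irrelevant formulas). -/
def satGammaB (I L : Interp Pred Arg) : BodyElem Conc Pred Arg → Prop
  | Sum.inl a => a ∈ I
  | Sum.inr d => (d.Mono → satIF d I L) ∧ (¬ d.Mono → d.sat I)

/-- Satisfaction of the strong loop formula `sLF(L,K)` by (the extension of) `I`. -/
def satSLF (P : Prog Conc Pred Arg) (I : Interp Pred Arg) (L : Set (Atom Pred Arg)) : Prop :=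
  (∃ a ∈ L, a ∈ I) →
    ∃ r ∈ P.rules, r.head ∈ L ∧ (∀ a ∈ L, Sum.inl a ∉ r.pos) ∧
      (∀ b ∈ r.pos, satGammaB I L b) ∧ (∀ b ∈ r.neg, ¬ satB I b)

/-- `v` is a positive (nonmonotonic) dependency of dl-atom `d`. -/
def posDep (d : DLA Conc Pred Arg) (v : Atom Pred Arg) : Prop :=
  ∃ I : Interp Pred Arg, ¬ d.sat I ∧ d.sat (I ∪ {v})

/-- `v` is a negative (nonmonotonic) dependency of dl-atom `d`. -/
def negDep (d : DLA Conc Pred Arg) (v : Atom Pred Arg) : Prop :=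
  ∃ I : Interp Pred Arg, d.sat I ∧ ¬ d.sat (I ∪ {v})

/-- Edge relation of the canonical dependency graph. -/
def edgeCanon (P : Prog Conc Pred Arg) (u v : Atom Pred Arg) : Prop :=
  ∃ r ∈ P.rules, r.head = u ∧
    ((∃ b ∈ r.pos, ∃ I : Interp Pred Arg, ¬ satB I b ∧ satB (I ∪ {v}) b) ∨
     (∃ b ∈ r.neg, ∃ I : Interp Pred Arg, satB I b ∧ ¬ satB (I ∪ {v}) b))

/-- Predicate extensions for the positive canonical irrelevant formula `pCF(A,L)`:
only predicates having an atom in `L` that is a positive dependency of `A` are renamed. -/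
def extPCF (d : DLA Conc Pred Arg) (I L : Interp Pred Arg) : Pred → Set Arg := fun p =>
  {e | ((∃ e', (p, e') ∈ L ∧ posDep d (p, e')) ∧ (p, e) ∈ I \ L) ∨
       ((¬ ∃ e', (p, e') ∈ L ∧ posDep d (p, e')) ∧ (p, e) ∈ I)}

/-- Predicate extensions for the negative canonical irrelevant formula `nCF(A,L)`. -/
def extNCF (d : DLA Conc Pred Arg) (I L : Interp Pred Arg) : Pred → Set Arg := fun p =>
  {e | ((∃ e', (p, e') ∈ L ∧ negDep d (p, e')) ∧ (p, e) ∈ I \ L) ∨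
       ((¬ ∃ e', (p, e') ∈ L ∧ negDep d (p, e')) ∧ (p, e) ∈ I)}

/-- `I' ⊨_O pCF(A,L)`. -/
def satPCF (d : DLA Conc Pred Arg) (I L : Interp Pred Arg) : Prop := d.eval (extPCF d I L)

/-- `I' ⊨_O nCF(A,L)`. -/
def satNCF (d : DLA Conc Pred Arg) (I L : Interp Pred Arg) : Prop := d.eval (extNCF d I L)

/-- `δ₁(A,L)`: nonmonotonic dl-atoms are replaced by `pCF(A,L)`; otherwise `γ(A,L)`. -/
def satDelta1 (I L : Interp Pred Arg) : BodyElem Conc Pred Arg → Prop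
  | Sum.inl a => a ∈ I
  | Sum.inr d => (¬ d.Mono → satPCF d I L) ∧ (d.Mono → satIF d I L)

/-- `δ₂(B,L)`: nonmonotonic dl-atoms are replaced by `nCF(B,L)`; otherwise unchanged. -/
def satDelta2 (I L : Interp Pred Arg) : BodyElem Conc Pred Arg → Prop
  | Sum.inl a => a ∈ I
  | Sum.inr d => (¬ d.Mono → satNCF d I L) ∧ (d.Mono → d.sat I)

/-- Satisfaction of the canonical loop formula `cLF(L,M,K)` by (the extension of) `I`. -/
def satCLF (P : Prog Conc Pred Arg) (I M : Interp Pred Arg) (L : Set (Atom Pred Arg)) : Prop :=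
  (∃ a ∈ L, a ∈ I) →
    ∃ r ∈ P.rules, r.head ∈ L ∧ (∀ a ∈ L, Sum.inl a ∉ r.pos) ∧ satBody M r ∧
      (∀ b ∈ r.pos, satDelta1 I L b) ∧ (∀ b ∈ r.neg, ¬ satDelta2 I L b)

/-- `I` is a canonical answer set of the dl-program. -/
def CanonAS (P : Prog Conc Pred Arg) (I : Interp Pred Arg) : Prop :=
  satComp P I ∧ ∀ L, IsLoop (edgeCanon P) L → satCLF P I I L

/-- A normal logic program: all body elements are ordinary atoms. -/
def Normal (P : Prog Conc Pred Arg) : Prop :=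
  ∀ r ∈ P.rules, ∀ b ∈ r.pos ∪ r.neg, ∃ a : Atom Pred Arg, b = Sum.inl a

/-- The Gelfond–Lifschitz-style reduct: delete rules with a satisfied negated body
member, and delete all negated members from remaining rules. -/
def glReduct (P : Prog Conc Pred Arg) (I : Interp Pred Arg) : Prog Conc Pred Arg :=
  ⟨{r' | ∃ r ∈ P.rules, (∀ b ∈ r.neg, ¬ satB I b) ∧ r' = ⟨r.head, r.pos, ∅⟩}⟩


/-- Chain lemma: if a property flips from false to true along a subset inclusion in a
finite type, some single added element witnesses a flip. -/
lemma flip_lemma {α : Type} [Finite α] (P : Set α → Prop) :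
    ∀ n (S T : Set α), (T \ S).ncard ≤ n → S ⊆ T → ¬ P S → P T →
      ∃ v ∈ T \ S, ∃ W, ¬ P W ∧ P (W ∪ {v}) := by
  intro n
  induction n with
  | zero =>
    intro S T hcard hST hS hT
    have h0 : (T \ S).ncard = 0 := Nat.le_zero.mp hcard
    have : T \ S = ∅ := (Set.ncard_eq_zero (Set.toFinite _)).mp h0
    have : T ⊆ S := Set.diff_eq_empty.mp this
    exact absurd hT (by rwa [Set.Subset.antisymm hST this] at hS)
  | succ n ih =>
    intro S T hcard hST hS hT
    have hne : (T \ S).Nonempty := by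
      rcases Set.eq_empty_or_nonempty (T \ S) with he | hne
      · exact absurd hT (by rwa [Set.Subset.antisymm hST (Set.diff_eq_empty.mp he)] at hS)
      · exact hne
    obtain ⟨v, hv⟩ := hne
    by_cases hP : P (S ∪ {v})
    · exact ⟨v, hv, S, hS, hP⟩
    · have hsub : S ∪ {v} ⊆ T := Set.union_subset hST (by simpa using hv.1)
      have hss : T \ (S ∪ {v}) ⊂ T \ S := by
        constructor
        · exact Set.diff_subset_diff_right Set.subset_union_left
        · intro hcon
          have := hcon hv
          exact this.2 (Or.inr rfl)
      have hlt : (T \ (S ∪ {v})).ncard < (T \ S).ncard :=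
        Set.ncard_lt_ncard hss (Set.toFinite _)
      have hle : (T \ (S ∪ {v})).ncard ≤ n := by omega
      obtain ⟨v', hv', W, hW⟩ := ih (S ∪ {v}) T hle hsub hP hT
      exact ⟨v', ⟨hv'.1, fun hmem => hv'.2 (Or.inl hmem)⟩, W, hW⟩

/-- In a finite nonempty set there is an element maximal with respect to reachability:
everything it reaches (within the ambient relation) reaches it back. -/
lemma exists_max {α : Type} [Finite α] (E : α → α → Prop) :
    ∀ n (D : Set α), D.ncard ≤ n → D.Nonempty →
      ∃ x ∈ D, ∀ y ∈ D, Relation.ReflTransGen E x y → Relation.ReflTransGen E y x := by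
  intro n
  induction n with
  | zero =>
    intro D hcard hne
    have h0 : D.ncard = 0 := Nat.le_zero.mp hcard
    rw [(Set.ncard_eq_zero (Set.toFinite _)).mp h0] at hne
    exact absurd hne (by simp)
  | succ n ih =>
    intro D hcard hne
    obtain ⟨x, hx⟩ := hne
    by_cases hgood : ∀ y ∈ D, Relation.ReflTransGen E x y → Relation.ReflTransGen E y x
    · exact ⟨x, hx, hgood⟩
    · push_neg at hgood
      obtain ⟨y, hy, hxy, hnyx⟩ := hgood
      set D' := {z ∈ D | ¬ Relation.ReflTransGen E z x} with hD'
      have hy' : y ∈ D' := ⟨hy, hnyx⟩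
      have hxnot : x ∉ D' := fun hmem => hmem.2 Relation.ReflTransGen.refl
      have hss : D' ⊂ D := ⟨Set.sep_subset _ _, fun hcon => hxnot (hcon hx)⟩
      have hlt : D'.ncard < D.ncard := Set.ncard_lt_ncard hss (Set.toFinite _)
      have hle : D'.ncard ≤ n := by omega
      obtain ⟨x', hx'D, hmax⟩ := ih D' hle ⟨y, hy'⟩
      refine ⟨x', hx'D.1, fun z hz hxz => ?_⟩
      by_cases hzx : Relation.ReflTransGen E z x
      · exact absurd (hxz.trans hzx) hx'D.2
      · exact hmax z ⟨hz, hzx⟩ hxz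

/-- If `L` is closed under `E`-steps, any `E`-path starting in `L` can be restricted to `L`. -/
lemma restrict_path {α : Type} (E : α → α → Prop) (L : Set α)
    (hclosed : ∀ a ∈ L, ∀ b, E a b → b ∈ L) :
    ∀ u v, Relation.ReflTransGen E u v → u ∈ L →
      Relation.ReflTransGen (fun a b => E a b ∧ a ∈ L ∧ b ∈ L) u v := by
  intro u v h
  induction h using Relation.ReflTransGen.head_induction_on with
  | refl => intro _; exact Relation.ReflTransGen.refl
  | head hab _ ih =>
    intro ha
    have hb := hclosed _ ha _ hab
    exact Relation.ReflTransGen.head ⟨hab, ha, hb⟩ (ih hb)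

/-- The irrelevant-formula extension is exactly the extension of `I \ L`. -/
lemma extIF_eq (I L : Interp Pred Arg) : extIF I L = extOf (I \ L) := by
  funext p
  ext e
  simp only [extIF, extOf, Set.mem_setOf_eq, Set.mem_diff]
  by_cases hp : ∃ e', (p, e') ∈ L
  · simp [hp]
  · simp only [hp, false_and, not_false_eq_true, true_and, false_or]
    exact ⟨fun hI => ⟨hI, fun hL => hp ⟨e, hL⟩⟩, fun hh => hh.1⟩

/-- Every canonical answer set of a dl-program is a strong answer set. -/
theorem stmt17 {Conc Pred Arg : Type} [Fintype Pred] [Fintype Arg]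
    (K : Prog Conc Pred Arg) (I : Interp Pred Arg) (h : CanonAS K I) :
    StrongAS K I := by
  obtain ⟨hcomp, hloop⟩ := h
  -- I is a model of the strong reduct
  have hImodel : isModel (strongReduct K I) I := by
    rintro r' ⟨r, hr, hnm, hneg, rfl⟩ hbody
    refine (hcomp r.head).mpr ⟨r, hr, rfl, ?_, hneg⟩
    intro b hb
    cases b with
    | inl a => exact hbody.1 _ ⟨hb, Or.inl ⟨a, rfl⟩⟩
    | inr d =>
      by_cases hdm : d.Mono
      · exact hbody.1 _ ⟨hb, Or.inr ⟨d, rfl, hdm⟩⟩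
      · exact hnm d hb hdm
  -- bodies of reduct rules are monotone
  have hmonoB : ∀ r' ∈ (strongReduct K I).rules, ∀ b ∈ r'.pos,
      ∀ S T : Interp Pred Arg, S ⊆ T → satB S b → satB T b := by
    rintro r' ⟨r, hr, hnm, hneg, rfl⟩ b hb S T hST hsat
    rcases hb.2 with ⟨a, rfl⟩ | ⟨d, rfl, hdm⟩
    · exact hST hsat
    · exact hdm hST hsat
  -- J : the least model of the strong reduct
  set J : Interp Pred Arg := ⋂₀ {N | isModel (strongReduct K I) N} with hJdef
  have hJlb : ∀ N, isModel (strongReduct K I) N → J ⊆ N :=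
    fun N hN => Set.sInter_subset_of_mem hN
  have hJI : J ⊆ I := hJlb I hImodel
  have hJmodel : isModel (strongReduct K I) J := by
    intro r' hr' hbody
    rw [hJdef, Set.mem_sInter]
    intro N hN
    have hr'2 := hr'
    obtain ⟨r, hr, hnm, hneg, hr'eq⟩ := hr'2
    refine hN r' hr' ⟨fun b hb => hmonoB r' hr' b hb J N (hJlb N hN) (hbody.1 b hb), ?_⟩
    rw [hr'eq]
    intro b hb
    exact absurd hb (Set.notMem_empty b)
  have hJfire : ∀ r₀ ∈ (strongReduct K I).rules, (∀ b ∈ r₀.pos, satB J b) → r₀.head ∈ J := by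
    intro r₀ h₀ hp
    have h₀2 := h₀
    obtain ⟨r, hrr, hnm, hneg, hEq⟩ := h₀2
    refine hJmodel r₀ h₀ ⟨hp, ?_⟩
    rw [hEq]
    intro b hb
    exact absurd hb (Set.notMem_empty b)
  -- it suffices to show I ⊆ J
  suffices hsub : I ⊆ J by
    exact ⟨hImodel, fun N hN => hsub.trans (hJlb N hN)⟩
  by_contra hnsub
  -- D : the difference
  set D : Interp Pred Arg := I \ J with hDdef
  have hDne : D.Nonempty := by
    rw [Set.not_subset] at hnsub
    obtain ⟨a, haI, haJ⟩ := hnsub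
    exact ⟨a, haI, haJ⟩
  -- every atom of D has a canonical edge into D
  have hout : ∀ a ∈ D, ∃ v ∈ D, edgeCanon K a v := by
    rintro a ⟨haI, haJ⟩
    obtain ⟨r, hr, hhead, hbody⟩ := (hcomp a).mp haI
    have hnm : ∀ d : DLA Conc Pred Arg, Sum.inr d ∈ r.pos → ¬ d.Mono → d.sat I :=
      fun d hd _ => hbody.1 _ hd
    set rr : Rule Conc Pred Arg := ⟨r.head,
        {b ∈ r.pos | (∃ a, b = Sum.inl a) ∨ ∃ d : DLA Conc Pred Arg, b = Sum.inr d ∧ d.Mono},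
        ∅⟩ with hrrdef
    have hr' : rr ∈ (strongReduct K I).rules :=
      ⟨r, hr, hnm, hbody.2, rfl⟩
    have hnsatJ : ¬ ∀ b ∈ {b ∈ r.pos |
        (∃ a, b = Sum.inl a) ∨ ∃ d : DLA Conc Pred Arg, b = Sum.inr d ∧ d.Mono}, satB J b := by
      intro hall
      exact haJ (hhead ▸ hJfire rr hr' hall)
    push_neg at hnsatJ
    obtain ⟨b, hb, hbJ⟩ := hnsatJ
    cases b with
    | inl a' =>
      refine ⟨a', ⟨hbody.1 _ hb.1, hbJ⟩, r, hr, hhead, Or.inl ⟨Sum.inl a', hb.1, ∅, ?_, ?_⟩⟩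
      · simp [satB]
      · simp [satB]
    | inr d =>
      have hsatI : d.sat I := hbody.1 _ hb.1
      obtain ⟨v, hv, W, hW1, hW2⟩ :=
        flip_lemma (fun S => (d : DLA Conc Pred Arg).sat S) (I \ J).ncard J I le_rfl hJI hbJ hsatI
      exact ⟨v, hv, r, hr, hhead, Or.inl ⟨Sum.inr d, hb.1, W, hW1, hW2⟩⟩
  -- edges restricted to D
  set E' : Atom Pred Arg → Atom Pred Arg → Prop :=
    fun u v => edgeCanon K u v ∧ u ∈ D ∧ v ∈ D with hE'def
  obtain ⟨x, hxD, hxmax⟩ := exists_max E' D.ncard D le_rfl hDne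
  set L : Set (Atom Pred Arg) := {y | Relation.ReflTransGen E' x y} with hLdef
  have hxL : x ∈ L := Relation.ReflTransGen.refl
  have hLD : L ⊆ D := by
    intro y hy
    rcases Relation.ReflTransGen.cases_tail hy with h | ⟨c, _, hcy⟩
    · rw [h]; exact hxD
    · exact hcy.2.2
  have hclosed : ∀ a ∈ L, ∀ b, E' a b → b ∈ L :=
    fun a ha b hab => Relation.ReflTransGen.tail ha hab
  have hterm : ∀ u ∈ L, ∀ v, edgeCanon K u v → v ∈ D → v ∈ L :=
    fun u hu v huv hvD => hclosed u hu v ⟨huv, hLD hu, hvD⟩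
  -- L is a loop of the canonical dependency graph
  have hLloop : IsLoop (edgeCanon K) L := by
    refine ⟨⟨x, hxL⟩, fun u hu v hv => ?_⟩
    obtain ⟨s, hsD, hus⟩ := hout u (hLD hu)
    have hsL : s ∈ L := hterm u hu s hus hsD
    have hsx : Relation.ReflTransGen E' s x := hxmax s (hLD hsL) hsL
    have hsv : Relation.ReflTransGen E' s v := hsx.trans hv
    have hres := restrict_path E' L hclosed s v hsv hsL
    have hres' : Relation.ReflTransGen
        (fun a b => edgeCanon K a b ∧ a ∈ L ∧ b ∈ L) s v :=
      Relation.ReflTransGen.mono (fun a b hab => ⟨hab.1.1, hab.2⟩) _ _ hres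
    exact Relation.TransGen.head' ⟨hus, hu, hsL⟩ hres'
  -- apply the canonical loop formula
  obtain ⟨r, hr, hheadL, hnoL, hbodyI, hδ1, _⟩ :=
    hloop L hLloop ⟨x, hxL, (hLD hxL).1⟩
  have hnm : ∀ d : DLA Conc Pred Arg, Sum.inr d ∈ r.pos → ¬ d.Mono → d.sat I :=
    fun d hd _ => hbodyI.1 _ hd
  set rr : Rule Conc Pred Arg := ⟨r.head,
      {b ∈ r.pos | (∃ a, b = Sum.inl a) ∨ ∃ d : DLA Conc Pred Arg, b = Sum.inr d ∧ d.Mono},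
      ∅⟩ with hrrdef
  have hr' : rr ∈ (strongReduct K I).rules :=
    ⟨r, hr, hnm, hbodyI.2, rfl⟩
  -- J satisfies the body of the reduct rule
  have hJbody : ∀ b ∈ {b ∈ r.pos |
      (∃ a, b = Sum.inl a) ∨ ∃ d : DLA Conc Pred Arg, b = Sum.inr d ∧ d.Mono}, satB J b := by
    rintro b ⟨hbpos, hcase⟩
    rcases hcase with ⟨a, rfl⟩ | ⟨d, rfl, hdm⟩
    · -- ordinary atom
      have haI : a ∈ I := hbodyI.1 _ hbpos
      have haL : a ∉ L := fun haL => hnoL a haL hbpos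
      show a ∈ J
      by_contra haJ
      have haD : a ∈ D := ⟨haI, haJ⟩
      have hedge : edgeCanon K r.head a :=
        ⟨r, hr, rfl, Or.inl ⟨Sum.inl a, hbpos, ∅, by simp [satB], by simp [satB]⟩⟩
      exact haL (hterm r.head hheadL a hedge haD)
    · -- monotonic dl-atom
      have hIF : satIF d I L := (hδ1 _ hbpos).2 hdm
      have hsatIL : d.sat (I \ L) := by
        unfold DLA.sat
        rw [← extIF_eq]
        exact hIF
      have hJIL : J ⊆ I \ L := fun a haJ =>
        ⟨hJI haJ, fun haL => (hLD haL).2 haJ⟩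
      show d.sat J
      by_contra hnJ
      obtain ⟨v, hv, W, hW1, hW2⟩ :=
        flip_lemma (fun S => (d : DLA Conc Pred Arg).sat S) ((I \ L) \ J).ncard J (I \ L)
          le_rfl hJIL hnJ hsatIL
      have hvD : v ∈ D := ⟨hv.1.1, hv.2⟩
      have hvL : v ∉ L := hv.1.2
      have hedge : edgeCanon K r.head v :=
        ⟨r, hr, rfl, Or.inl ⟨Sum.inr d, hbpos, W, hW1, hW2⟩⟩
      exact hvL (hterm r.head hheadL v hedge hvD)
  have hheadJ : r.head ∈ J := hJfire rr hr' hJbody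
  exact (hLD hheadL).2 hheadJ

end DLP
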